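/- Fix a simple graph G on a vertex type V and a symmetric edge-weight function w : V → V → ℝ≥0. Let I be a finite index set and for each i ∈ I let S_i ⊆ V be a source set and R_i ⊆ V a set with S_i ⊆ R_i. Fix a vertex v and let U = { i ∈ I | v ∉ R_i }. Then Σ_{i ∈ I} d_w(S_i, v) ≥ Σ_{i ∈ I \ U} d_w(S_i, v) + Σ_{i ∈ U} θ_{R_i}, where θ_{R_i} = ⨅_{v' ∉ R_i} D_{R_i}(v') is the frontier bound of R_i. (This is the lower bound on the cost of a partially-seen match: keywords that have already seen a vertex contribute their exact distance, and each unseen keyword contributes at least the value of the current head of its priority queue.) -/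

import Mathlib

open scoped ENNReal

/-- The weight of a walk: the sum of the edge weights along its darts. -/
noncomputable def walkWeight {V : Type*} (G : SimpleGraph V) (w : V → V → NNReal)
    {u v : V} (p : G.Walk u v) : ℝ≥0∞ :=
  (p.darts.map fun d => (w d.toProd.1 d.toProd.2 : ℝ≥0∞)).sum

/-- The weighted distance from a source set `S` to a vertex `v`: the infimum of
the weights of all walks from some vertex of `S` to `v` (`∞` if there is none). -/
noncomputable def wdist {V : Type*} (G : SimpleGraph V) (w : V → V → NNReal)
    (S : Set V) (v : V) : ℝ≥0∞ :=
  ⨅ (s : V) (_ : s ∈ S) (p : G.Walk s v), walkWeight G w p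

/-- The frontier value `D_R(v)` of a vertex `v ∉ R`. -/
noncomputable def frontierVal {V : Type*} (G : SimpleGraph V) (w : V → V → NNReal)
    (S R : Set V) (v : V) : ℝ≥0∞ :=
  ⨅ (u : V) (_ : u ∈ R) (_ : G.Adj u v), (wdist G w S u + (w u v : ℝ≥0∞))

/-- The frontier bound `θ_R = ⨅_{v ∉ R} D_R(v)`. -/
noncomputable def frontierBound {V : Type*} (G : SimpleGraph V) (w : V → V → NNReal)
    (S R : Set V) : ℝ≥0∞ :=
  ⨅ (v : V) (_ : v ∉ R), frontierVal G w S R v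

lemma walkWeight_concat {V : Type*} (G : SimpleGraph V) (w : V → V → NNReal)
    {s b c : V} (p : G.Walk s b) (h : G.Adj b c) :
    walkWeight G w (p.concat h) = walkWeight G w p + w b c := by
  simp [walkWeight, SimpleGraph.Walk.concat, SimpleGraph.Walk.darts_append]

lemma wdist_triangle {V : Type*} (G : SimpleGraph V) (w : V → V → NNReal)
    (S : Set V) {s b : V} (h : G.Adj s b) :
    wdist G w S b ≤ wdist G w S s + w s b := by
  simp only [wdist, ENNReal.iInf_add]
  refine le_iInf fun s' => le_iInf fun hs' => le_iInf fun p => ?_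
  calc wdist G w S b ≤ walkWeight G w (p.concat h) :=
        iInf_le_of_le s' (iInf_le_of_le hs' (iInf_le _ _))
    _ = walkWeight G w p + w s b := walkWeight_concat G w p h

lemma frontier_le_walk {V : Type*} (G : SimpleGraph V) (w : V → V → NNReal)
    (S R : Set V) {s v : V} (p : G.Walk s v) (hs : s ∈ R) (hv : v ∉ R) :
    frontierBound G w S R ≤ wdist G w S s + walkWeight G w p := by
  induction p with
  | nil => exact absurd hs hv
  | @cons s b v h q ih =>
    by_cases hb : b ∈ R
    · calc frontierBound G w S R ≤ wdist G w S b + walkWeight G w q := ih hb hv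
        _ ≤ (wdist G w S s + w s b) + walkWeight G w q := by
            gcongr; exact wdist_triangle G w S h
        _ = wdist G w S s + walkWeight G w (SimpleGraph.Walk.cons h q) := by
            simp [walkWeight, add_assoc]
    · calc frontierBound G w S R ≤ frontierVal G w S R b :=
            iInf_le_of_le b (iInf_le _ hb)
        _ ≤ wdist G w S s + w s b :=
            iInf_le_of_le s (iInf_le_of_le hs (iInf_le _ h))
        _ ≤ wdist G w S s + walkWeight G w (SimpleGraph.Walk.cons h q) := by
            simp only [walkWeight, SimpleGraph.Walk.darts_cons, List.map_cons, List.sum_cons]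
            exact add_le_add (le_refl _) (le_add_right (le_refl _))

lemma frontier_le_wdist {V : Type*} (G : SimpleGraph V) (w : V → V → NNReal)
    (S R : Set V) (hSR : S ⊆ R) {v : V} (hv : v ∉ R) :
    frontierBound G w S R ≤ wdist G w S v := by
  rw [wdist]
  refine le_iInf fun s => le_iInf fun hs => le_iInf fun p => ?_
  have h0 : wdist G w S s = 0 := by
    refine le_antisymm ?_ zero_le
    calc wdist G w S s ≤ walkWeight G w (SimpleGraph.Walk.nil : G.Walk s s) :=
          iInf_le_of_le s (iInf_le_of_le hs (iInf_le _ _))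
      _ = 0 := by simp [walkWeight]
  have := frontier_le_walk G w S R p (hSR hs) hv
  rwa [h0, zero_add] at this


/-- lower bound on the cost of a partially-seen match: for a finite
family of source sets `S i ⊆ R i` and a vertex `v`, with `U` the set of indices
whose keyword has not yet seen `v` (i.e. `v ∉ R i`), the total distance
`Σ_i d_w(S i, v)` is at least the exact distances over the seen indices plus the
frontier bounds `θ_{R i}` over the unseen indices. -/
theorem partially_seen_lower_bound {V I : Type*} [Fintype I] [DecidableEq I]
    (G : SimpleGraph V) (w : V → V → NNReal) (hw : ∀ u v, w u v = w v u)
    (S R : I → Set V) (hSR : ∀ i, S i ⊆ R i) (v : V)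
    (U : Finset I) (hU : ∀ i, i ∈ U ↔ v ∉ R i) :
    ∑ i ∈ Finset.univ \ U, wdist G w (S i) v + ∑ i ∈ U, frontierBound G w (S i) (R i)
      ≤ ∑ i : I, wdist G w (S i) v := by
  rw [← Finset.sum_sdiff (Finset.subset_univ U)]
  gcongr with i hi
  exact frontier_le_wdist G w (S i) (R i) (hSR i) ((hU i).1 hi)
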